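/- arXiv:0802.4369 — 2 statements merged into one kernel-verified Lean document; each statement's English description precedes it below -/
import Mathlib

section
/- Let {H_x}_{x∈X} be a consistent selection of subgroups for the cocycle f, let U ⊆ G be open, C ⊆ G compact, and n ∈ ℤ fixed. Then the sets {y ∈ X : f(n,y)·H_y ∩ U·H_y ≠ ∅} and {y ∈ X : f(n,y)·H_y ∩ C·H_y = ∅} are both open in X. -/
open Topology Pointwise Set Filter

section Defs

variable {X : Type*} [TopologicalSpace X] {G : Type*} [TopologicalSpace G] [Group G]

/-- The positive-iterate part of the cocycle generated by `f` over `T`: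
`f(n,x) = f(T^{n-1}x) ⋯ f(Tx) · f(x)` for `n ≥ 1` and `f(0,x) = e`. -/
def cocycleNat (T : X ≃ₜ X) (f : X → G) : ℕ → X → G
  | 0, _ => 1
  | n + 1, x => f ((T.toEquiv ^ n) x) * cocycleNat T f n x

/-- The cocycle generated by `f` over `T`, at integer times:
`f(n,x)` as above for `n ≥ 0` and `f(n,x) = f(-n, T^n x)⁻¹` for `n < 0`. -/
def cocycle (T : X ≃ₜ X) (f : X → G) (n : ℤ) (x : X) : G :=
  if 0 ≤ n then cocycleNat T f n.toNat x
  else (cocycleNat T f (-n).toNat ((T.toEquiv ^ n) x))⁻¹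

/-- The `n`-th power of the skew product `T_f` on `X × G`:
`T_f^n (x,g) = (T^n x, f(n,x)·g)`. -/
def skewPow (T : X ≃ₜ X) (f : X → G) (n : ℤ) (p : X × G) : X × G :=
  ((T.toEquiv ^ n) p.1, cocycle T f n p.1 * p.2)

/-- The `n`-th power of the skew product `T_f` acting on `X × G/H`:
`T_f^n (x, gH) = (T^n x, f(n,x)·gH)`. -/
def skewPowQ (T : X ≃ₜ X) (f : X → G) (H : Subgroup G) (n : ℤ) (p : X × (G ⧸ H)) :
    X × (G ⧸ H) :=
  ((T.toEquiv ^ n) p.1, cocycle T f n p.1 • p.2)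

/-- The local essential range `E_x(f)`: all `g ∈ G` such that for every open
neighbourhood `U` of `x` and every open neighbourhood `V` of the identity there are
`n ∈ ℤ` and `y ∈ U ∩ T⁻ⁿU` with `f(n,y) ∈ V·g`. -/
def essRange (T : X ≃ₜ X) (f : X → G) (x : X) : Set G :=
  {g | ∀ U : Set X, IsOpen U → x ∈ U → ∀ V : Set G, IsOpen V → (1 : G) ∈ V →
    ∃ n : ℤ, ∃ y ∈ U, (T.toEquiv ^ n) y ∈ U ∧ ∃ v ∈ V, cocycle T f n y = v * g}

/-- `P_x(f)`: the vertical section at `x` of the closure of the `T_f`-orbit of `(x,e)`. -/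
def Pset (T : X ≃ₜ X) (f : X → G) (x : X) : Set G :=
  {g | (x, g) ∈ closure (Set.range fun n : ℤ => skewPow T f n (x, 1))}

/-- `𝒟(f) = {x : E_x(f) = P_x(f)}`. -/
def Dset (T : X ≃ₜ X) (f : X → G) : Set X :=
  {x | essRange T f x = Pset T f x}

/-- Topological recurrence of the cocycle generated by `f`: for every open
neighbourhood `V` of the identity of `G` and every nonempty open `U ⊆ X` there is
`n ≠ 0` with `T⁻ⁿU ∩ U ∩ {x : f(n,x) ∈ V} ≠ ∅`. -/
def IsRecurrentCocycle (T : X ≃ₜ X) (f : X → G) : Prop :=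
  ∀ V : Set G, IsOpen V → (1 : G) ∈ V → ∀ U : Set X, IsOpen U → U.Nonempty →
    ∃ n : ℤ, n ≠ 0 ∧ ∃ x ∈ U, (T.toEquiv ^ n) x ∈ U ∧ cocycle T f n x ∈ V

/-- Minimality of a homeomorphism: every orbit is dense. -/
def IsMinimal (T : X ≃ₜ X) : Prop :=
  ∀ x : X, Dense (Set.range fun n : ℤ => (T.toEquiv ^ n) x)

/-- A consistent selection of subgroups for the cocycle generated by `f`: a family of
closed subgroups `H x ⊆ E_x(f)` with `H (Tⁿx) = f(n,x)·(H x)·f(n,x)⁻¹` depending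
continuously on `x` for the Fell topology. -/
structure IsConsistentSelection (T : X ≃ₜ X) (f : X → G) (H : X → Subgroup G) : Prop where
  isClosed : ∀ x : X, IsClosed (H x : Set G)
  subset_essRange : ∀ x : X, (H x : Set G) ⊆ essRange T f x
  conj : ∀ (x : X) (n : ℤ), (H ((T.toEquiv ^ n) x) : Set G) =
    (fun h => cocycle T f n x * h * (cocycle T f n x)⁻¹) '' (H x : Set G)
  fell_compact : ∀ (x : X) (K : Set G), IsCompact K → K ∩ (H x : Set G) = ∅ →
    ∃ W ∈ 𝓝 x, ∀ y ∈ W, K ∩ (H y : Set G) = ∅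
  fell_open : ∀ (x : X) (O : Set G), IsOpen O → (O ∩ (H x : Set G)).Nonempty →
    ∃ W ∈ 𝓝 x, ∀ y ∈ W, (O ∩ (H y : Set G)).Nonempty

/-- The `T_f`-orbit closure of a point of `X × G`. -/
def orbitClosure (T : X ≃ₜ X) (f : X → G) (p : X × G) : Set (X × G) :=
  closure (Set.range fun n : ℤ => skewPow T f n p)

/-- For `C ⊆ X × G`, the set `H = {g : C·g⁻¹ = C}`, where `C·g = {(y, c·g) : (y,c) ∈ C}`. -/
def stabSet (C : Set (X × G)) : Set G :=
  {g : G | (fun p : X × G => (p.1, p.2 * g⁻¹)) '' C = C}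

/-- A strongly regular orbit closure: a `T_f`-orbit closure which projects onto all
of `X` and all of whose vertical sections are single left cosets of
`H = {g : C·g⁻¹ = C}`. -/
def IsStronglyRegularOC (T : X ≃ₜ X) (f : X → G) (C : Set (X × G)) : Prop :=
  (∃ p : X × G, C = orbitClosure T f p) ∧ Prod.fst '' C = Set.univ ∧
    ∀ x : X, ∃ gx : G, {g : G | (x, g) ∈ C} = {gx} * stabSet C

/-- A strongly regular cocycle: one whose skew product admits a strongly regular
orbit closure. -/
def IsStronglyRegularCocycle (T : X ≃ₜ X) (f : X → G) : Prop :=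
  ∃ C : Set (X × G), IsStronglyRegularOC T f C

/-- A regular cocycle: some `T_f`-orbit closure projects onto all of `X`. -/
def IsRegularCocycle (T : X ≃ₜ X) (f : X → G) : Prop :=
  ∃ p : X × G, Prod.fst '' orbitClosure T f p = Set.univ

end Defs


section Aux

variable {X : Type*} [TopologicalSpace X] {G : Type*} [TopologicalSpace G] [Group G]

theorem contPermNat (T : X ≃ₜ X) (m : ℕ) : Continuous fun x => (T.toEquiv ^ m) x := by
  induction m with
  | zero => simpa using continuous_id'
  | succ k ih =>
    have e : ∀ x, (T.toEquiv ^ (k+1)) x = T ((T.toEquiv ^ k) x) := by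
      intro x; rw [pow_succ']; rfl
    simp only [e]; exact T.continuous.comp ih

theorem contPerm (T : X ≃ₜ X) (n : ℤ) : Continuous fun x => (T.toEquiv ^ n) x := by
  cases n with
  | ofNat m => simpa using contPermNat T m
  | negSucc m =>
    have h2 : ∀ m : ℕ, Continuous fun x => ((T.toEquiv ^ m)⁻¹ : Equiv.Perm X) x := by
      intro m
      induction m with
      | zero => simpa using continuous_id'
      | succ k ih =>
        have e : ∀ x, ((T.toEquiv ^ (k+1))⁻¹ : Equiv.Perm X) x
            = ((T.toEquiv ^ k)⁻¹ : Equiv.Perm X) (T.symm x) := by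
          intro x; rw [pow_succ', mul_inv_rev]; rfl
        simp only [e]; exact ih.comp T.symm.continuous
    simpa [zpow_negSucc] using h2 (m+1)

theorem contCocycleNat [IsTopologicalGroup G] (T : X ≃ₜ X) {f : X → G} (hf : Continuous f)
    (m : ℕ) : Continuous (cocycleNat T f m) := by
  induction m with
  | zero => exact continuous_const
  | succ k ih =>
    show Continuous fun x => f ((T.toEquiv ^ k) x) * cocycleNat T f k x
    exact (hf.comp (contPermNat T k)).mul ih

theorem contCocycle [IsTopologicalGroup G] (T : X ≃ₜ X) {f : X → G} (hf : Continuous f)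
    (n : ℤ) : Continuous (cocycle T f n) := by
  unfold cocycle
  by_cases h : 0 ≤ n
  · simp only [if_pos h]; exact contCocycleNat T hf n.toNat
  · simp only [if_neg h]
    exact ((contCocycleNat T hf (-n).toNat).comp (contPerm T n)).inv

theorem coset_inter_nonempty_iff (H : Subgroup G) (c : G) (S : Set G) :
    (({c} * (H : Set G)) ∩ (S * (H : Set G))).Nonempty ↔ c ∈ S * (H : Set G) := by
  constructor
  · rintro ⟨g, hg1, hg2⟩
    obtain ⟨c', hc', h, hh, rfl⟩ := hg1
    obtain ⟨s, hs, h', hh', heq⟩ := hg2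
    rw [Set.mem_singleton_iff] at hc'
    have heq' : s * h' = c' * h := heq
    rw [hc'] at heq'
    have hcEq : s * (h' * h⁻¹) = c := by rw [← mul_assoc, heq']; group
    exact hcEq ▸ Set.mul_mem_mul hs (H.mul_mem hh' (H.inv_mem hh))
  · intro hc
    refine ⟨c, ?_, hc⟩
    exact ⟨c, rfl, 1, H.one_mem, mul_one c⟩

end Aux

theorem statement_2
    {X : Type*} [TopologicalSpace X] [CompactSpace X] [TopologicalSpace.MetrizableSpace X]
    {G : Type*} [TopologicalSpace G] [Group G] [IsTopologicalGroup G]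
    [LocallyCompactSpace G] [SecondCountableTopology G] [T2Space G]
    (T : X ≃ₜ X) (hT : IsMinimal T) (f : X → G) (hf : Continuous f)
    (H : X → Subgroup G) (hH : IsConsistentSelection T f H)
    (U : Set G) (hUopen : IsOpen U) (K : Set G) (hK : IsCompact K) (n : ℤ) :
    IsOpen {y : X |
        (({cocycle T f n y} * (H y : Set G)) ∩ (U * (H y : Set G))).Nonempty} ∧
      IsOpen {y : X |
        ({cocycle T f n y} * (H y : Set G)) ∩ (K * (H y : Set G)) = ∅} := by
  set c : X → G := cocycle T f n with hc
  have hcont : Continuous c := contCocycle T hf n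
  constructor
  · -- first set open
    rw [isOpen_iff_mem_nhds]
    intro y hy
    rw [Set.mem_setOf_eq, coset_inter_nonempty_iff] at hy
    obtain ⟨u, hu, h, hh, heq⟩ := hy
    -- φ (a, b) = a * b⁻¹ ; φ (c y, h) = u ∈ U
    have hφ : Continuous fun p : G × G => p.1 * p.2⁻¹ :=
      continuous_fst.mul continuous_snd.inv
    have hopen : IsOpen ((fun p : G × G => p.1 * p.2⁻¹) ⁻¹' U) := hUopen.preimage hφ
    have hmem : (c y, h) ∈ (fun p : G × G => p.1 * p.2⁻¹) ⁻¹' U := by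
      have heq' : u * h = c y := heq
      have : c y * h⁻¹ = u := by rw [← heq']; group
      simpa [this] using hu
    obtain ⟨N, O, hN, hO, hcN, hhO, hsub⟩ := isOpen_prod_iff.mp hopen (c y) h hmem
    obtain ⟨W₁, hW₁, hW₁p⟩ := hH.fell_open y O hO ⟨h, hhO, hh⟩
    have hW₂ : c ⁻¹' N ∈ 𝓝 y := hcont.continuousAt.preimage_mem_nhds (hN.mem_nhds hcN)
    filter_upwards [hW₁, hW₂] with z hz1 hz2
    rw [coset_inter_nonempty_iff]
    obtain ⟨h', hh'O, hh'H⟩ := hW₁p z hz1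
    have : c z * h'⁻¹ ∈ U := hsub (Set.mk_mem_prod hz2 hh'O)
    exact ⟨c z * h'⁻¹, this, h', hh'H, by group⟩
  · -- second set open
    rw [isOpen_iff_mem_nhds]
    intro y hy
    rw [Set.mem_setOf_eq, ← Set.not_nonempty_iff_eq_empty, coset_inter_nonempty_iff] at hy
    -- K' = K⁻¹ * {c y} is compact and disjoint from H y
    have hK' : IsCompact (K⁻¹ * ({c y} : Set G)) :=
      (hK.inv).mul isCompact_singleton
    have hdisj : K⁻¹ * ({c y} : Set G) ⊆ ((H y : Set G))ᶜ := by
      rintro g ⟨k, hk, c', hc', rfl⟩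
      rcases Set.mem_singleton_iff.mp hc' with rfl
      intro hgH
      apply hy
      exact ⟨k⁻¹, Set.inv_mem_inv.mp (by simpa using hk), k * c y, hgH, by group⟩
    obtain ⟨V, hV, hVsub⟩ := compact_open_separated_mul_right hK'
      ((hH.isClosed y).isOpen_compl) hdisj
    obtain ⟨V', hV'mem, hV'sub, hV'cpt⟩ := local_compact_nhds hV
    have hKV : IsCompact (K⁻¹ * ({c y} : Set G) * V') := hK'.mul hV'cpt
    have hKVdisj : (K⁻¹ * ({c y} : Set G) * V') ∩ (H y : Set G) = ∅ := by
      rw [Set.eq_empty_iff_forall_notMem]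
      rintro g ⟨hg1, hg2⟩
      obtain ⟨a, ha, v, hv, rfl⟩ := hg1
      exact hVsub (Set.mul_mem_mul ha (hV'sub hv)) hg2
    obtain ⟨W₁, hW₁, hW₁p⟩ := hH.fell_compact y _ hKV hKVdisj
    have hW₂ : c ⁻¹' ({c y} * V') ∈ 𝓝 y := by
      apply hcont.continuousAt.preimage_mem_nhds
      have hmap := (Homeomorph.mulLeft (c y)).map_nhds_eq 1
      rw [show (Homeomorph.mulLeft (c y)) 1 = c y by simp] at hmap
      have himg : (⇑(Homeomorph.mulLeft (c y))) '' V' ∈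
          Filter.map (⇑(Homeomorph.mulLeft (c y))) (𝓝 (1 : G)) :=
        Filter.image_mem_map hV'mem
      rw [hmap] at himg
      rw [Set.singleton_mul]
      simpa using himg
    filter_upwards [hW₁, hW₂] with z hz1 hz2
    rw [← Set.not_nonempty_iff_eq_empty, coset_inter_nonempty_iff]
    intro hmem
    obtain ⟨k, hk, h, hhH, heq⟩ := hmem
    obtain ⟨cy, hcy, v, hv, heq2⟩ := hz2
    rcases Set.mem_singleton_iff.mp hcy with rfl
    have hin : h ∈ K⁻¹ * ({c y} : Set G) * V' := by
      have : h = k⁻¹ * c y * v := by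
        have : h = k⁻¹ * c z := by rw [← heq]; group
        rw [this, ← heq2, mul_assoc]
      rw [this]
      exact Set.mul_mem_mul (Set.mul_mem_mul (Set.inv_mem_inv.mpr hk) rfl) hv
    have := hW₁p z hz1
    rw [Set.eq_empty_iff_forall_notMem] at this
    exact this h ⟨hin, hhH⟩
end

section
/- For every x ∈ X the set P_x(f) is a closed sub-semigroup of G (closed in G and closed under multiplication), and the set E_x(f) is closed and symmetric, i.e. E_x(f)^{-1} = E_x(f). Consequently, for every x with E_x(f) = P_x(f) (i.e. x ∈ 𝒟(f)), E_x(f) is a closed subgroup of G. -/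
open Topology Pointwise Set Filter

section Aux

set_option linter.unusedSectionVars false

variable {X : Type*} [TopologicalSpace X] {G : Type*} [TopologicalSpace G] [Group G]
  [IsTopologicalGroup G] (T : X ≃ₜ X) (f : X → G)

lemma aux_contPow (n : ℤ) : Continuous ⇑(T.toEquiv ^ n) := by
  induction n using Int.induction_on with
  | zero => simpa using continuous_id
  | succ k ih =>
      have : ⇑(T.toEquiv ^ ((k : ℤ) + 1)) = ⇑(T.toEquiv ^ (k : ℤ)) ∘ ⇑T.toEquiv := by
        funext y; simp [zpow_add_one, Equiv.Perm.mul_apply]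
      rw [this]; exact ih.comp T.continuous
  | pred k ih =>
      have : ⇑(T.toEquiv ^ (-(k : ℤ) - 1)) = ⇑(T.toEquiv ^ (-(k : ℤ))) ∘ ⇑T.symm := by
        funext y
        have : T.toEquiv ^ (-(k : ℤ) - 1) = T.toEquiv ^ (-(k : ℤ)) * (T.toEquiv)⁻¹ :=
          zpow_sub_one _ _
        simp only [this, Equiv.Perm.mul_apply, Equiv.Perm.inv_def, Function.comp_apply]
        rfl
      rw [this]; exact ih.comp T.symm.continuous

lemma cocycleNat_succ' (n : ℕ) (x : X) :
    cocycleNat T f (n + 1) x = cocycleNat T f n (T x) * f x := by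
  induction n generalizing x with
  | zero => simp [cocycleNat]
  | succ k ih =>
      have h1 : cocycleNat T f (k + 1 + 1) x
          = f ((T.toEquiv ^ (k + 1)) x) * cocycleNat T f (k + 1) x := rfl
      have h2 : cocycleNat T f (k + 1) (T x)
          = f ((T.toEquiv ^ k) (T x)) * cocycleNat T f k (T x) := rfl
      have h3 : (T.toEquiv ^ (k + 1)) x = (T.toEquiv ^ k) (T x) := by
        simp only [pow_succ, Equiv.Perm.mul_apply]; rfl
      rw [h1, ih, h2, h3, mul_assoc]

lemma cocycle_zero (x : X) : cocycle T f 0 x = 1 := by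
  simp [cocycle, cocycleNat]

lemma cocycle_succ (n : ℤ) (x : X) :
    cocycle T f (n + 1) x = f ((T.toEquiv ^ n) x) * cocycle T f n x := by
  rcases le_or_gt 0 n with hn | hn
  · have hn1 : (0 : ℤ) ≤ n + 1 := by omega
    have ht : (n + 1).toNat = n.toNat + 1 := by omega
    have hp : T.toEquiv ^ n = T.toEquiv ^ n.toNat := by
      rw [← zpow_natCast]; congr 1; omega
    simp only [cocycle, if_pos hn, if_pos hn1, ht, hp]
    rfl
  · rcases eq_or_lt_of_le (by omega : n + 1 ≤ 0) with h0 | h0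
    · have hn' : n = -1 := by omega
      subst hn'
      have hneg : ¬ (0 : ℤ) ≤ -1 := by norm_num
      have hle : (0 : ℤ) ≤ -1 + 1 := by norm_num
      simp only [cocycle, if_neg hneg, if_pos hle]
      have ht1 : ((-1 : ℤ) + 1).toNat = 0 := rfl
      have ht2 : (-(-1 : ℤ)).toNat = 1 := rfl
      rw [ht1, ht2]
      have hc1 : cocycleNat T f 1 ((T.toEquiv ^ (-1 : ℤ)) x)
          = f ((T.toEquiv ^ (0 : ℕ)) ((T.toEquiv ^ (-1 : ℤ)) x)) * 1 := rfl
      rw [hc1]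
      simp [cocycleNat]
    · -- n + 1 < 0
      have hn0 : ¬ (0 : ℤ) ≤ n := by omega
      have hn10 : ¬ (0 : ℤ) ≤ n + 1 := by omega
      simp only [cocycle, if_neg hn0, if_neg hn10]
      set k := (-(n + 1)).toNat with hk
      have hkk : (-n).toNat = k + 1 := by omega
      rw [hkk, cocycleNat_succ']
      have harg : T ((T.toEquiv ^ n) x) = (T.toEquiv ^ (n + 1)) x := by
        have : T.toEquiv ^ (n + 1) = T.toEquiv * T.toEquiv ^ n := by
          rw [add_comm, zpow_add, zpow_one]
        simp [this, Equiv.Perm.mul_apply]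
      rw [harg]
      group

lemma cocycle_add (m n : ℤ) (x : X) :
    cocycle T f (m + n) x = cocycle T f m ((T.toEquiv ^ n) x) * cocycle T f n x := by
  induction m using Int.induction_on with
  | zero => simp [cocycle_zero]
  | succ k ih =>
      have h1 : (k : ℤ) + 1 + n = ((k : ℤ) + n) + 1 := by ring
      rw [h1, cocycle_succ, ih, cocycle_succ]
      have harg : (T.toEquiv ^ ((k : ℤ) + n)) x
          = (T.toEquiv ^ (k : ℤ)) ((T.toEquiv ^ n) x) := by
        rw [zpow_add]; rfl
      rw [harg, mul_assoc]
  | pred k ih =>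
      have hstep : ∀ (m : ℤ) (y : X),
          cocycle T f (m - 1) y = (f ((T.toEquiv ^ (m - 1)) y))⁻¹ * cocycle T f m y := by
        intro m y
        have := cocycle_succ T f (m - 1) y
        rw [sub_add_cancel] at this
        rw [this]; group
      have h1 : -(k : ℤ) - 1 + n = (-(k : ℤ) + n) - 1 := by ring
      rw [h1, hstep, ih, hstep]
      have harg : (T.toEquiv ^ ((-(k : ℤ) + n) - 1)) x
          = (T.toEquiv ^ (-(k : ℤ) - 1)) ((T.toEquiv ^ n) x) := by
        rw [show (-(k : ℤ) + n) - 1 = (-(k : ℤ) - 1) + n by ring, zpow_add]; rfl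
      rw [harg, mul_assoc]

lemma cocycle_neg (n : ℤ) (x : X) :
    cocycle T f (-n) ((T.toEquiv ^ n) x) = (cocycle T f n x)⁻¹ := by
  have := cocycle_add T f (-n) n x
  rw [neg_add_cancel, cocycle_zero] at this
  exact eq_inv_of_mul_eq_one_left this.symm

lemma cocycle_continuous (hf : Continuous f) (n : ℤ) :
    Continuous (cocycle T f n) := by
  have hnat : ∀ k : ℕ, Continuous (cocycleNat T f k) := by
    intro k
    induction k with
    | zero => simpa [cocycleNat] using continuous_const
    | succ j ih =>
        have : Continuous fun x => f ((T.toEquiv ^ j) x) * cocycleNat T f j x := by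
          have hc : Continuous ⇑(T.toEquiv ^ j) := by
            have := aux_contPow T (j : ℤ)
            have he : (T.toEquiv ^ (j : ℤ)) = T.toEquiv ^ j := zpow_natCast _ _
            rwa [he] at this
          exact (hf.comp hc).mul ih
        exact this
  by_cases hn : 0 ≤ n
  · have : cocycle T f n = cocycleNat T f n.toNat := by
      funext y; simp [cocycle, hn]
    rw [this]; exact hnat _
  · have : cocycle T f n
        = fun y => (cocycleNat T f (-n).toNat ((T.toEquiv ^ n) y))⁻¹ := by
      funext y; simp [cocycle, hn]
    rw [this]
    exact ((hnat _).comp (aux_contPow T n)).inv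

lemma skewPow_continuous (hf : Continuous f) (n : ℤ) :
    Continuous (skewPow T f n) := by
  unfold skewPow
  exact ((aux_contPow T n).comp continuous_fst).prodMk
    (((cocycle_continuous T f hf n).comp continuous_fst).mul continuous_snd)

lemma skewPow_comp (m n : ℤ) (p : X × G) :
    skewPow T f m (skewPow T f n p) = skewPow T f (m + n) p := by
  unfold skewPow
  dsimp only
  have h1 : (T.toEquiv ^ m) ((T.toEquiv ^ n) p.1) = (T.toEquiv ^ (m + n)) p.1 := by
    rw [zpow_add]; rfl
  have h2 : cocycle T f m ((T.toEquiv ^ n) p.1) * (cocycle T f n p.1 * p.2)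
      = cocycle T f (m + n) p.1 * p.2 := by
    rw [cocycle_add, mul_assoc]
  rw [h1, h2]

end Aux

theorem statement_13
    {X : Type*} [TopologicalSpace X] [CompactSpace X] [TopologicalSpace.MetrizableSpace X]
    {G : Type*} [TopologicalSpace G] [Group G] [IsTopologicalGroup G]
    [LocallyCompactSpace G] [SecondCountableTopology G] [T2Space G]
    (T : X ≃ₜ X) (hT : IsMinimal T) (f : X → G) (hf : Continuous f)
    (x : X) :
    IsClosed (Pset T f x) ∧
    (∀ g ∈ Pset T f x, ∀ h ∈ Pset T f x, g * h ∈ Pset T f x) ∧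
    IsClosed (essRange T f x) ∧
    (essRange T f x)⁻¹ = essRange T f x ∧
    (x ∈ Dset T f → ∃ H : Subgroup G, (H : Set G) = essRange T f x) := by
  set C : Set (X × G) := closure (Set.range fun n : ℤ => skewPow T f n (x, 1)) with hC
  -- C is invariant under every skewPow
  have hinv : ∀ n : ℤ, Set.MapsTo (skewPow T f n) C C := by
    intro n
    have hmt : Set.MapsTo (skewPow T f n)
        (Set.range fun m : ℤ => skewPow T f m (x, 1))
        (Set.range fun m : ℤ => skewPow T f m (x, 1)) := by
      rintro _ ⟨m, rfl⟩
      exact ⟨n + m, (skewPow_comp T f n m (x, 1)).symm⟩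
    exact hmt.closure (skewPow_continuous T f hf n)
  -- P closed
  have hPclosed : IsClosed (Pset T f x) := by
    have : Pset T f x = (fun g : G => ((x, g) : X × G)) ⁻¹' C := rfl
    rw [this]
    exact IsClosed.preimage (by fun_prop) isClosed_closure
  -- P semigroup
  have hPmul : ∀ g ∈ Pset T f x, ∀ h ∈ Pset T f x, g * h ∈ Pset T f x := by
    intro g hg h hh
    have hhC : ((x, h) : X × G) ∈ C := hh
    have hgC : ((x, g) : X × G) ∈ C := hg
    set R : X × G → X × G := fun p => (p.1, p.2 * h) with hR
    have hRc : Continuous R := by fun_prop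
    have hmt : Set.MapsTo R (Set.range fun m : ℤ => skewPow T f m (x, 1)) C := by
      rintro _ ⟨m, rfl⟩
      have : R (skewPow T f m (x, 1)) = skewPow T f m (x, h) := by
        simp [hR, skewPow]
      rw [this]
      exact hinv m hhC
    have hmt2 : Set.MapsTo R C C := by
      have := hmt.closure hRc
      simpa [hC, closure_closure] using this
    exact hmt2 hgC
  -- E closed
  have hEclosed : IsClosed (essRange T f x) := by
    have : closure (essRange T f x) ⊆ essRange T f x := by
      intro g hg U hU hxU V hV h1V
      obtain ⟨W, hWopen, h1W, hWW⟩ :=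
        exists_open_nhds_one_mul_subset (hV.mem_nhds h1V)
      have hopen : IsOpen (W * ({g} : Set G)) := hWopen.mul_right
      have hgmem : g ∈ W * ({g} : Set G) :=
        ⟨1, h1W, g, rfl, one_mul g⟩
      obtain ⟨g', hg'W, hg'E⟩ :=
        mem_closure_iff.mp hg _ hopen hgmem
      obtain ⟨w, hw, _, hgg, rfl⟩ := hg'W
      obtain ⟨n, y, hyU, hTyU, v, hvW, hcv⟩ := hg'E U hU hxU W hWopen h1W
      refine ⟨n, y, hyU, hTyU, v * w, hWW ⟨v, hvW, w, hw, rfl⟩, ?_⟩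
      rw [hcv, hgg, mul_assoc]
    exact isClosed_of_closure_subset this
  -- E symmetric
  have hEinv : ∀ g ∈ essRange T f x, g⁻¹ ∈ essRange T f x := by
    intro g hg U hU hxU V hV h1V
    set V'' : Set G := (fun v : G => g⁻¹ * v⁻¹ * g) ⁻¹' V with hV''
    have hV''open : IsOpen V'' :=
      hV.preimage (by fun_prop)
    have h1V'' : (1 : G) ∈ V'' := by
      simp [hV'']; simpa using h1V
    obtain ⟨n, y, hyU, hTyU, v, hvV'', hcv⟩ := hg U hU hxU V'' hV''open h1V''
    refine ⟨-n, (T.toEquiv ^ n) y, hTyU, ?_, g⁻¹ * v⁻¹ * g, hvV'', ?_⟩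
    · have : (T.toEquiv ^ (-n)) ((T.toEquiv ^ n) y) = y := by
        rw [zpow_neg]
        exact Equiv.symm_apply_apply _ _
      rw [this]; exact hyU
    · rw [cocycle_neg, hcv]
      group
  have hEsymm : (essRange T f x)⁻¹ = essRange T f x := by
    ext a
    simp only [Set.mem_inv]
    constructor
    · intro ha
      have := hEinv _ ha
      simpa using this
    · intro ha
      exact hEinv _ ha
  refine ⟨hPclosed, hPmul, hEclosed, hEsymm, ?_⟩
  intro hx
  have hEP : essRange T f x = Pset T f x := hx
  have hone : (1 : G) ∈ Pset T f x := by
    have : ((x, (1 : G)) : X × G) ∈ Set.range fun n : ℤ => skewPow T f n (x, 1) := by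
      refine ⟨0, ?_⟩
      simp [skewPow, cocycle_zero]
    exact subset_closure this
  refine ⟨{ carrier := essRange T f x
            one_mem' := by
              show (1 : G) ∈ essRange T f x
              rw [hEP]; exact hone
            mul_mem' := by
              intro a b ha hb
              have ha' : a ∈ Pset T f x := hEP ▸ ha
              have hb' : b ∈ Pset T f x := hEP ▸ hb
              show a * b ∈ essRange T f x
              rw [hEP]; exact hPmul a ha' b hb'
            inv_mem' := by
              intro a ha
              exact hEinv a ha }, rfl⟩
end
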